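/- Consider the 2-state HMM with operators τ₁ = [[0.25, 0.5],[0.75, 0]], τ₂ = [[0,0],[0,0.5]] and initial state x₀ = (1,0)ᵀ. With the normalized update x_{t} = τ_{y_t} x_{t−1} / (1ᵀ τ_{y_t} x_{t−1}), after observing the sequence (1,1) the states satisfy x₁ = (0.25, 0.75)ᵀ, x₂ = (0.7, 0.3)ᵀ, and x₂ = 0.6 x₀ + 0.4 x₁, with x₀ and x₁ linearly independent. -/
import Mathlib


open Matrix

noncomputable section

def τ1 : Matrix (Fin 2) (Fin 2) ℝ := !![0.25, 0.5; 0.75, 0]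
def τ2 : Matrix (Fin 2) (Fin 2) ℝ := !![0, 0; 0, 0.5]
def x0 : Fin 2 → ℝ := ![1, 0]
def x1 : Fin 2 → ℝ := ((1 : Fin 2 → ℝ) ⬝ᵥ (τ1 *ᵥ x0))⁻¹ • (τ1 *ᵥ x0)
def x2 : Fin 2 → ℝ := ((1 : Fin 2 → ℝ) ⬝ᵥ (τ1 *ᵥ x1))⁻¹ • (τ1 *ᵥ x1)

lemma hx1 : x1 = ![0.25, 0.75] := by
  funext i
  fin_cases i <;>
    simp [x1, x0, τ1, mulVec, dotProduct, Fin.sum_univ_two] <;> norm_num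

lemma hx2 : x2 = ![0.7, 0.3] := by
  funext i
  fin_cases i <;>
    simp [x2, hx1, τ1, mulVec, dotProduct, Fin.sum_univ_two] <;> norm_num

/-- The concrete HMM reaches, after observing the sequence (1,1), a state lying strictly
inside the convex hull of two linearly independent previously reached states. -/
theorem hmm_convex_combination_example :
    x1 = ![0.25, 0.75] ∧ x2 = ![0.7, 0.3] ∧
      x2 = (0.6 : ℝ) • x0 + (0.4 : ℝ) • x1 ∧ LinearIndependent ℝ ![x0, x1] := by
  refine ⟨hx1, hx2, ?_, ?_⟩
  · funext i
    fin_cases i <;> simp [hx2, hx1, x0] <;> norm_num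
  · rw [hx1]
    apply LinearIndependent.pair_iff.mpr
    intro s t h
    have h0 := congrFun h 0
    have h1 := congrFun h 1
    simp [x0] at h0 h1
    norm_num at h1
    subst h1
    simp at h0
    exact ⟨h0, rfl⟩
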